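/- Let n ≥ 1 and let ζ_{n,1},…,ζ_{n,n} be the zeros of the n-th Legendre polynomial P_n. Then for any convex function f : [-1,1] → ℝ, (1/n) Σ_{i=1}^{n} f(ζ_{n,i}) ≤ (f(1) + f(-1))/2. -/

import Mathlib

open Polynomial

/-- The Legendre polynomial `P_n`, defined via the Rodrigues formula. -/
noncomputable def legendrePoly (n : ℕ) : Polynomial ℝ :=
  Polynomial.C (1 / (2 ^ n * n.factorial : ℝ)) *
    Polynomial.derivative^[n] ((Polynomial.X ^ 2 - 1) ^ n)

private lemma Qexpand (n : ℕ) :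
    ((X : ℝ[X]) ^ 2 - 1) ^ n = expand ℝ 2 ((X - 1) ^ n) := by
  rw [map_pow, map_sub, expand_X, map_one]

private lemma Qcoeff_odd (n m : ℕ) (hm : ¬ 2 ∣ m) :
    (((X : ℝ[X]) ^ 2 - 1) ^ n).coeff m = 0 := by
  rw [Qexpand, coeff_expand (by norm_num), if_neg hm]

private lemma Qmonic (n : ℕ) : (((X : ℝ[X]) ^ 2 - 1) ^ n).Monic := by
  apply Polynomial.Monic.pow
  have : ((X : ℝ[X]) ^ 2 - 1) = X ^ 2 - C 1 := by simp
  rw [this]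
  exact monic_X_pow_sub_C 1 (by norm_num)

private lemma QnatDegree (n : ℕ) : (((X : ℝ[X]) ^ 2 - 1) ^ n).natDegree = 2 * n := by
  have : ((X : ℝ[X]) ^ 2 - 1) = X ^ 2 - C 1 := by simp
  rw [natDegree_pow, this, natDegree_X_pow_sub_C]
  ring

private lemma Rcoeff (n m : ℕ) :
    (Polynomial.derivative^[n] (((X : ℝ[X]) ^ 2 - 1) ^ n)).coeff m
      = ((m + n).descFactorial n : ℝ) * (((X : ℝ[X]) ^ 2 - 1) ^ n).coeff (m + n) := by
  rw [coeff_iterate_derivative, nsmul_eq_mul]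

private lemma Rcoeff_n (n : ℕ) :
    (Polynomial.derivative^[n] (((X : ℝ[X]) ^ 2 - 1) ^ n)).coeff n
      = ((2 * n).descFactorial n : ℝ) := by
  have h1 : (((X : ℝ[X]) ^ 2 - 1) ^ n).coeff (n + n) = 1 := by
    have := (Qmonic n).leadingCoeff
    rwa [leadingCoeff, QnatDegree, two_mul] at this
  rw [Rcoeff, h1, mul_one, two_mul]

private lemma RnatDegree (n : ℕ) :
    (Polynomial.derivative^[n] (((X : ℝ[X]) ^ 2 - 1) ^ n)).natDegree = n := by
  apply le_antisymm
  · rw [natDegree_le_iff_coeff_eq_zero]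
    intro N hN
    rw [Rcoeff]
    have : (((X : ℝ[X]) ^ 2 - 1) ^ n).coeff (N + n) = 0 := by
      apply coeff_eq_zero_of_natDegree_lt
      rw [QnatDegree]; omega
    rw [this, mul_zero]
  · apply le_natDegree_of_ne_zero
    rw [Rcoeff_n]
    have : (2 * n).descFactorial n ≠ 0 := by
      simp only [ne_eq, Nat.descFactorial_eq_zero_iff_lt]; omega
    exact_mod_cast this

private lemma Rcoeff_pred (n : ℕ) (hn : 1 ≤ n) :
    (Polynomial.derivative^[n] (((X : ℝ[X]) ^ 2 - 1) ^ n)).coeff (n - 1) = 0 := by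
  rw [Rcoeff, Qcoeff_odd, mul_zero]
  omega

theorem legendre_zeros_choquet (n : ℕ) (hn : 1 ≤ n) (ζ : Fin n → ℝ)
    (hζmem : ∀ i, ζ i ∈ Set.Ioo (-1 : ℝ) 1)
    (hζroot : ∀ i, (legendrePoly n).eval (ζ i) = 0)
    (hζinj : Function.Injective ζ)
    (f : ℝ → ℝ) (hf : ConvexOn ℝ (Set.Icc (-1 : ℝ) 1) f) :
    (1 / n) * ∑ i, f (ζ i) ≤ (f 1 + f (-1)) / 2 := by
  set p := legendrePoly n with hp
  have hc : (1 / (2 ^ n * n.factorial : ℝ)) ≠ 0 := by positivity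
  have hRn := Rcoeff_n n
  have hdesc : ((2 * n).descFactorial n : ℝ) ≠ 0 := by
    have : (2 * n).descFactorial n ≠ 0 := by
      simp only [ne_eq, Nat.descFactorial_eq_zero_iff_lt]; omega
    exact_mod_cast this
  have hpcoeffn : p.coeff n ≠ 0 := by
    rw [hp, legendrePoly, coeff_C_mul, hRn]
    exact mul_ne_zero hc hdesc
  have hp0 : p ≠ 0 := fun h => hpcoeffn (by simp [h])
  have hpdeg : p.natDegree = n := by
    rw [hp, legendrePoly, natDegree_C_mul hc, RnatDegree]
  have hppred : p.coeff (n - 1) = 0 := by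
    rw [hp, legendrePoly, coeff_C_mul, Rcoeff_pred n hn, mul_zero]
  -- roots multiset equals the ζ's
  set M : Multiset ℝ := Multiset.map ζ Finset.univ.val with hM
  have hMcard : Multiset.card M = n := by simp [hM]
  have hMnodup : M.Nodup := Multiset.Nodup.map hζinj Finset.univ.nodup
  have hle : M ≤ p.roots := by
    rw [Multiset.le_iff_count]
    intro a
    by_cases ha : a ∈ M
    · obtain ⟨i, hi, hia⟩ := Multiset.mem_map.mp ha
      have h1 : Multiset.count a M ≤ 1 := (Multiset.nodup_iff_count_le_one.mp hMnodup) _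
      have h2 : 1 ≤ Multiset.count a p.roots := by
        rw [Multiset.one_le_count_iff_mem, mem_roots']
        exact ⟨hp0, hia ▸ hζroot i⟩
      omega
    · simp [Multiset.count_eq_zero_of_notMem ha]
  have hroots : p.roots = M := by
    refine (Multiset.eq_of_le_of_card_le hle ?_).symm
    rw [hMcard]
    calc Multiset.card p.roots ≤ p.natDegree := p.card_roots'
    _ = n := hpdeg
  -- sum of roots is zero
  have hsum : ∑ i, ζ i = 0 := by
    have hsplit : p.Splits := by
      rw [splits_iff_card_roots, hroots, hMcard, hpdeg]
    set q := C p.leadingCoeff⁻¹ * p with hq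
    have hlc : p.leadingCoeff ≠ 0 := leadingCoeff_ne_zero.mpr hp0
    have hqmonic : q.Monic := by
      rw [hq, mul_comm]; exact monic_mul_leadingCoeff_inv hp0
    have hqroots : q.roots = p.roots := roots_C_mul p (inv_ne_zero hlc)
    have hqdeg : q.natDegree = n := by
      rw [hq, natDegree_C_mul (inv_ne_zero hlc), hpdeg]
    have hqsplit : q.Splits := by
      rw [splits_iff_card_roots, hqroots, hroots, hMcard, hqdeg]
    have := hqsplit.nextCoeff_eq_neg_sum_roots_of_monic hqmonic
    have hnext : q.nextCoeff = 0 := by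
      rw [nextCoeff_of_natDegree_pos (by omega), hqdeg, hq, coeff_C_mul, hppred, mul_zero]
    rw [hnext, hqroots] at this
    have hMsum : M.sum = 0 := by
      rw [hroots] at this
      linarith [this]
    exact hMsum
  -- convexity step
  have key : ∀ i, f (ζ i) ≤ ((1 - ζ i)/2) * f (-1) + ((1 + ζ i)/2) * f 1 := by
    intro i
    obtain ⟨h1, h2⟩ := hζmem i
    have h0a : (0:ℝ) ≤ (1 - ζ i)/2 := by linarith
    have h0b : (0:ℝ) ≤ (1 + ζ i)/2 := by linarith
    have hab : (1 - ζ i)/2 + (1 + ζ i)/2 = 1 := by ring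
    have := hf.2 (Set.mem_Icc.mpr ⟨le_refl (-1:ℝ), by norm_num⟩)
      (Set.mem_Icc.mpr ⟨by norm_num, le_refl (1:ℝ)⟩) h0a h0b hab
    have harg : ((1 - ζ i)/2) • (-1 : ℝ) + ((1 + ζ i)/2) • (1 : ℝ) = ζ i := by
      simp [smul_eq_mul]; ring
    rw [harg] at this
    simpa [smul_eq_mul] using this
  have hsumle : ∑ i, f (ζ i) ≤ (n / 2) * f (-1) + (n / 2) * f 1 := by
    calc ∑ i, f (ζ i) ≤ ∑ i, (((1 - ζ i)/2) * f (-1) + ((1 + ζ i)/2) * f 1) :=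
      Finset.sum_le_sum fun i _ => key i
    _ = (n / 2) * f (-1) + (n / 2) * f 1 := by
      rw [Finset.sum_add_distrib, ← Finset.sum_mul, ← Finset.sum_mul]
      have e1 : ∑ i, (1 - ζ i)/2 = (n : ℝ)/2 := by
        rw [← Finset.sum_div, Finset.sum_sub_distrib, hsum]
        simp
      have e2 : ∑ i, (1 + ζ i)/2 = (n : ℝ)/2 := by
        rw [← Finset.sum_div, Finset.sum_add_distrib, hsum]
        simp
      rw [e1, e2]
  have hnpos : (0:ℝ) < n := by exact_mod_cast hn
  rw [div_mul_eq_mul_div, one_mul, div_le_iff₀ hnpos]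
  calc ∑ i, f (ζ i) ≤ (n / 2) * f (-1) + (n / 2) * f 1 := hsumle
  _ = (f 1 + f (-1)) / 2 * n := by ring
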